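/- Let A be a C*-algebra and a, b positive elements of A with ‖a - b‖ < ε. Then the positive part (a - ε)₊ is Cuntz subequivalent to b, i.e., for every δ > 0 there exists x ∈ A with ‖x* b x - (a - ε)₊‖ < δ. -/

import Mathlib

open scoped NNReal

/-- Cuntz subequivalence: `a ≾ b` if for every `δ > 0` there is `x` with
`‖x* b x - a‖ < δ`. -/
def CuntzSub {A : Type*} [NonUnitalCStarAlgebra A] (a b : A) : Prop :=
  ∀ δ : ℝ, 0 < δ → ∃ x : A, ‖star x * b * x - a‖ < δ

open scoped CStarAlgebra

set_option maxHeartbeats 1000000 in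
open Unitization in
lemma cuntzSub_of_le {A : Type*} [NonUnitalCStarAlgebra A]
    [PartialOrder A] [StarOrderedRing A] {u v : A} (hu : 0 ≤ u) (hv : 0 ≤ v)
    (huv : u ≤ v) : CuntzSub u v := by
  intro δ hδ
  set η : ℝ := δ / 2 with hηdef
  have hη0 : 0 < η := by positivity
  have hu' : (0 : A⁺¹) ≤ (u : A⁺¹) := inr_nonneg_iff.mpr hu
  have hv' : (0 : A⁺¹) ≤ (v : A⁺¹) := inr_nonneg_iff.mpr hv
  have hv'sa : IsSelfAdjoint ((v : A⁺¹)) := .of_nonneg hv'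
  have huv' : (u : A⁺¹) ≤ (v : A⁺¹) := (inr_le_iff u v (.of_nonneg hu) (.of_nonneg hv)).mpr huv
  have hspec : ∀ t ∈ spectrum ℝ (v : A⁺¹), 0 ≤ t := fun t ht =>
    spectrum_nonneg_of_nonneg hv' ht
  -- functions
  set f : ℝ → ℝ := fun t => (Real.sqrt (t + η))⁻¹ with hfdef
  set m : ℝ → ℝ := fun t => f t * t * f t with hmdef
  have hm : ∀ t : ℝ, 0 ≤ t → m t = t / (t + η) := by
    intro t ht
    have h1 : (0:ℝ) ≤ t + η := by positivity
    simp only [hmdef, hfdef]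
    rw [mul_comm  ((Real.sqrt (t + η))⁻¹) t, mul_assoc, ← mul_inv,
      Real.mul_self_sqrt h1, div_eq_mul_inv]
  have hm_mem : ∀ t : ℝ, 0 ≤ t → m t ∈ Set.Icc 0 1 := by
    intro t ht
    rw [hm t ht]
    constructor
    · positivity
    · rw [div_le_one (by positivity)]; linarith
  -- continuity
  have hf_cont : ContinuousOn f (spectrum ℝ (v : A⁺¹)) := by
    apply ContinuousOn.inv₀
    · fun_prop
    · intro t ht
      have := hspec t ht
      positivity
  have hm_cont : ContinuousOn m (spectrum ℝ (v : A⁺¹)) :=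
    (hf_cont.mul continuousOn_id).mul hf_cont
  have h1m_cont : ContinuousOn (fun t => 1 - m t) (spectrum ℝ (v : A⁺¹)) :=
    continuousOn_const.sub hm_cont
  have hsq_cont : ContinuousOn (fun t => Real.sqrt (1 - m t)) (spectrum ℝ (v : A⁺¹)) :=
    Real.continuous_sqrt.comp_continuousOn h1m_cont
  -- elements
  set d : A⁺¹ := cfc f (v : A⁺¹) with hddef
  have hd_sa : IsSelfAdjoint d := cfc_predicate f _
  set s : A := cfcₙ Real.sqrt u with hsdef
  have hs_nonneg : (0:A) ≤ s := cfcₙ_nonneg fun t _ => Real.sqrt_nonneg t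
  have hs_sa : IsSelfAdjoint s := .of_nonneg hs_nonneg
  have hss : s * s = u := by
    rw [hsdef, ← cfcₙ_mul _ _ u]
    conv_rhs => rw [← cfcₙ_id ℝ u]
    apply cfcₙ_congr
    intro t ht
    exact Real.mul_self_sqrt (quasispectrum_nonneg_of_nonneg u hu t ht)
  -- the witness
  refine ⟨d.fst • s + d.snd * s, ?_⟩
  set x : A := d.fst • s + d.snd * s with hxdef
  have hxB : (x : A⁺¹) = d * (s : A⁺¹) := by
    ext <;> simp [hxdef]
  -- conjugation identity
  have hconj : ∀ g : ℝ → ℝ, ContinuousOn g (spectrum ℝ (v : A⁺¹)) →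
      (cfc g (v : A⁺¹)) * (v : A⁺¹) * (cfc g (v : A⁺¹)) =
        cfc (fun t => g t * t * g t) (v : A⁺¹) := by
    intro g hg
    have h1 : cfc (fun t : ℝ => g t * t * g t) ((v:A⁺¹)) =
        cfc (fun t : ℝ => g t * t) ((v:A⁺¹)) * cfc g ((v:A⁺¹)) :=
      cfc_mul (fun t => g t * t) g ((v:A⁺¹)) (hg.mul continuousOn_id) hg
    have h2 : cfc (fun t : ℝ => g t * t) ((v:A⁺¹)) =
        cfc g ((v:A⁺¹)) * cfc (fun t : ℝ => t) ((v:A⁺¹)) :=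
      cfc_mul g (fun t => t) ((v:A⁺¹)) hg continuousOn_id
    rw [h1, h2, cfc_id' ℝ ((v:A⁺¹))]
  have hdvd : d * (v : A⁺¹) * d = cfc m (v : A⁺¹) := hconj f hf_cont
  -- w
  set w : A⁺¹ := cfc (fun t => Real.sqrt (1 - m t)) (v : A⁺¹) with hwdef
  have hw_sa : IsSelfAdjoint w := cfc_predicate _ _
  have hww' : w * w = cfc (fun t => 1 - m t) ((v:A⁺¹)) := by
    have h1 : cfc (fun t : ℝ => Real.sqrt (1 - m t) * Real.sqrt (1 - m t)) ((v:A⁺¹)) =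
        w * w := cfc_mul _ _ ((v:A⁺¹)) hsq_cont hsq_cont
    rw [← h1]
    apply cfc_congr
    intro t ht
    exact Real.mul_self_sqrt (by linarith [(hm_mem t (hspec t ht)).2])
  have hww : w * w = 1 - cfc m (v : A⁺¹) := by
    rw [hww', cfc_sub (fun _ => (1:ℝ)) m ((v:A⁺¹)) continuousOn_const hm_cont,
      cfc_const_one ℝ ((v:A⁺¹))]
  -- main identity
  have hstar : star ((d : A⁺¹) * (s : A⁺¹)) = (s : A⁺¹) * d := by
    rw [star_mul, hd_sa.star_eq, (isSelfAdjoint_inr (R := ℂ)).mpr hs_sa |>.star_eq]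
  have husu : ((u:A) : A⁺¹) = (s : A⁺¹) * (s : A⁺¹) := by
    rw [← Unitization.inr_mul, hss]
  have hkey : ((star x * v * x - u : A) : A⁺¹) =
      -((s : A⁺¹) * (w * w) * (s : A⁺¹)) := by
    simp only [Unitization.inr_sub, Unitization.inr_mul, Unitization.inr_star]
    rw [hxB, hstar, hww, husu]
    rw [show (s:A⁺¹) * d * (v:A⁺¹) * (d * (s:A⁺¹)) = (s:A⁺¹) * (d * (v:A⁺¹) * d) * (s:A⁺¹)
      from by noncomm_ring, hdvd]
    noncomm_ring
  -- norm estimate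
  have hy : ‖(s : A⁺¹) * (w * w) * (s : A⁺¹)‖ = ‖w * (u : A⁺¹) * w‖ := by
    have h1 : (s : A⁺¹) * (w * w) * (s : A⁺¹) = star (w * (s:A⁺¹)) * (w * (s:A⁺¹)) := by
      rw [star_mul, hw_sa.star_eq, (isSelfAdjoint_inr (R := ℂ)).mpr hs_sa |>.star_eq]
      noncomm_ring
    have h2 : w * (u : A⁺¹) * w = (w * (s:A⁺¹)) * star (w * (s:A⁺¹)) := by
      rw [star_mul, hw_sa.star_eq, (isSelfAdjoint_inr (R := ℂ)).mpr hs_sa |>.star_eq]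
      have : ((u:A) : A⁺¹) = (s : A⁺¹) * (s : A⁺¹) := by rw [← Unitization.inr_mul, hss]
      rw [this]; noncomm_ring
    rw [h1, h2, CStarRing.norm_star_mul_self, CStarRing.norm_self_mul_star]
  have hwuw_le : w * (u : A⁺¹) * w ≤ w * (v : A⁺¹) * w :=
    IsSelfAdjoint.conjugate_le_conjugate huv' hw_sa
  have hwuw_nonneg : (0:A⁺¹) ≤ w * (u : A⁺¹) * w :=
    IsSelfAdjoint.conjugate_nonneg hu' hw_sa
  have hwvw : w * (v : A⁺¹) * w =
      cfc (fun t => Real.sqrt (1 - m t) * t * Real.sqrt (1 - m t)) (v : A⁺¹) :=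
    hconj _ hsq_cont
  have hnorm2 : ‖w * (v : A⁺¹) * w‖ ≤ η := by
    rw [hwvw]
    apply norm_cfc_le hη0.le
    intro t ht
    have ht0 := hspec t ht
    have hmm := hm_mem t ht0
    have h1 : (0:ℝ) < t + η := by positivity
    have h1m : (0:ℝ) ≤ 1 - m t := by linarith [hmm.2]
    have heq : Real.sqrt (1 - m t) * t * Real.sqrt (1 - m t) = (1 - m t) * t := by
      rw [mul_comm (Real.sqrt (1 - m t)) t, mul_assoc, Real.mul_self_sqrt h1m, mul_comm]
    have hval : (1 - m t) * t ≤ η := by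
      rw [hm t ht0]
      rw [show (1 - t / (t + η)) * t = η * t / (t + η) by field_simp; ring]
      rw [div_le_iff₀ h1]
      nlinarith
    rw [heq, Real.norm_eq_abs, abs_of_nonneg (mul_nonneg h1m ht0)]
    exact hval
  have hfinal : ‖star x * v * x - u‖ ≤ η := by
    rw [← Unitization.norm_inr (𝕜 := ℂ), hkey, norm_neg, hy]
    calc ‖w * (u : A⁺¹) * w‖ ≤ ‖w * (v : A⁺¹) * w‖ :=
          CStarAlgebra.norm_le_norm_of_nonneg_of_le hwuw_nonneg hwuw_le
      _ ≤ η := hnorm2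
  calc ‖star x * v * x - u‖ ≤ η := hfinal
    _ < δ := by rw [hηdef]; linarith


set_option maxHeartbeats 1000000 in
/-- If `a, b` are positive with `‖a - b‖ < ε`, then `(a - ε)₊ ≾ b`. -/
theorem cuntz_below_of_close {A : Type*} [NonUnitalCStarAlgebra A]
    [PartialOrder A] [StarOrderedRing A] (a b : A) (ε : ℝ) (hε : 0 < ε)
    (ha : 0 ≤ a) (hb : 0 ≤ b) (hab : ‖a - b‖ < ε) :
    CuntzSub (cfcₙ (fun t : ℝ => max (t - ε) 0) a) b := by
  intro δ hδ
  set g : ℝ → ℝ := fun t => max (t - ε) 0 with hgdef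
  have hg0 : g 0 = 0 := by
    simp only [hgdef, zero_sub]
    exact max_eq_right (by linarith)
  have hg_nonneg : ∀ t, 0 ≤ g t := fun t => le_max_right _ _
  have hg_cont : Continuous g := (continuous_id.sub continuous_const).max continuous_const
  have hsg_cont : Continuous (fun t => Real.sqrt (g t)) := Real.continuous_sqrt.comp hg_cont
  have ha_sa : IsSelfAdjoint a := .of_nonneg ha
  have hqs : ∀ t ∈ quasispectrum ℝ a, 0 ≤ t := quasispectrum_nonneg_of_nonneg a ha
  set e : A := cfcₙ g a with hedef
  have he_nonneg : (0:A) ≤ e := cfcₙ_nonneg fun t _ => hg_nonneg t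
  set q : A := cfcₙ (fun t => Real.sqrt (g t)) a with hqdef
  have hq_sa : IsSelfAdjoint q := cfcₙ_predicate _ a
  have hsg0 : Real.sqrt (g 0) = 0 := by rw [hg0, Real.sqrt_zero]
  have hqq : q * q = e := by
    have h1 : cfcₙ (fun t : ℝ => Real.sqrt (g t) * Real.sqrt (g t)) a = q * q :=
      cfcₙ_mul _ _ a hsg_cont.continuousOn hsg0 hsg_cont.continuousOn hsg0
    rw [← h1]
    exact cfcₙ_congr fun t _ => Real.mul_self_sqrt (hg_nonneg t)
  have hqaq : q * a * q = cfcₙ (fun t : ℝ => Real.sqrt (g t) * t * Real.sqrt (g t)) a := by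
    have h1 : cfcₙ (fun t : ℝ => Real.sqrt (g t) * t * Real.sqrt (g t)) a =
        cfcₙ (fun t : ℝ => Real.sqrt (g t) * t) a * q :=
      cfcₙ_mul _ _ a ((hsg_cont.mul continuous_id).continuousOn) (by simp [hsg0])
        hsg_cont.continuousOn hsg0
    have h2 : cfcₙ (fun t : ℝ => Real.sqrt (g t) * t) a = q * cfcₙ (fun t : ℝ => t) a :=
      cfcₙ_mul _ _ a hsg_cont.continuousOn hsg0 continuousOn_id rfl
    rw [h1, h2, cfcₙ_id' ℝ a]
  have h1 : ε • e ≤ q * a * q := by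
    rw [hqaq, hedef, ← cfcₙ_smul ε g a hg_cont.continuousOn hg0]
    apply cfcₙ_mono
    · intro t ht
      have ht0 := hqs t ht
      have heqt : Real.sqrt (g t) * t * Real.sqrt (g t) = g t * t := by
        rw [mul_comm (Real.sqrt (g t)) t, mul_assoc, Real.mul_self_sqrt (hg_nonneg t), mul_comm]
      rw [heqt, smul_eq_mul]
      rcases le_or_gt t ε with h | h
      · rw [hgdef]
        simp only
        rw [max_eq_right (by linarith)]
        simp
      · have : g t = t - ε := max_eq_left (by linarith)
        rw [this]
        nlinarith
    · exact (hg_cont.const_smul ε).continuousOn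
    · exact ((hsg_cont.mul continuous_id).mul hsg_cont).continuousOn
    · simp [hg0]
    · simp [hsg0]
  have h2 : q * (a - b) * q ≤ ‖a - b‖ • e := by
    have := CStarAlgebra.star_left_conjugate_le_norm_smul (a := q) (b := a - b)
      (ha_sa.sub (.of_nonneg hb))
    rwa [hq_sa.star_eq, hqq] at this
  set r : ℝ := ‖a - b‖ with hrdef
  set s : ℝ := ε - r with hsdef
  have hs0 : 0 < s := by rw [hsdef]; linarith
  have h3 : s • e ≤ q * b * q := by
    calc s • e = ε • e - r • e := by rw [hsdef, sub_smul]
      _ ≤ q * a * q - r • e := sub_le_sub_right h1 _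
      _ ≤ q * a * q - q * (a - b) * q := sub_le_sub_left h2 _
      _ = q * b * q := by noncomm_ring
  have h4 : (0:A) ≤ s • e := by
    rw [hedef, ← cfcₙ_smul s g a hg_cont.continuousOn hg0]
    exact cfcₙ_nonneg fun t _ => by
      simpa using mul_nonneg hs0.le (hg_nonneg t)
  have h5 : (0:A) ≤ q * b * q := le_trans h4 h3
  obtain ⟨x, hx⟩ := cuntzSub_of_le h4 h5 h3 (s * δ) (by positivity)
  refine ⟨(Real.sqrt s)⁻¹ • (q * x), ?_⟩
  have hss : (Real.sqrt s)⁻¹ * (Real.sqrt s)⁻¹ = s⁻¹ := by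
    rw [← mul_inv, Real.mul_self_sqrt hs0.le]
  have hz : star ((Real.sqrt s)⁻¹ • (q * x)) * b * ((Real.sqrt s)⁻¹ • (q * x)) =
      s⁻¹ • (star x * (q * b * q) * x) := by
    rw [star_smul, star_mul, hq_sa.star_eq, star_trivial]
    rw [smul_mul_assoc, smul_mul_assoc, mul_smul_comm, smul_smul, hss]
    congr 1
    noncomm_ring
  rw [hz]
  have : s⁻¹ • (star x * (q * b * q) * x) - e = s⁻¹ • (star x * (q * b * q) * x - s • e) := by
    rw [smul_sub, smul_smul, inv_mul_cancel₀ hs0.ne', one_smul]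
  rw [this, norm_smul, Real.norm_eq_abs, abs_of_pos (by positivity)]
  calc s⁻¹ * ‖star x * (q * b * q) * x - s • e‖ < s⁻¹ * (s * δ) := by
        apply mul_lt_mul_of_pos_left hx (by positivity)
    _ = δ := by field_simp
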